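/- Let f : ℝ → ℝ be continuous and let u be a solution of the radial equation on an interval J ⊆ (0,∞). Define E(r) = m·r^N·I(r) + (N−m)·r^(N−1)·φ_m(u'(r))·u(r). Then E is differentiable on J and E'(r) = r^(N−1)·Q(u(r)) for every r ∈ J, where Q(s) = m·N·F(s) − (N−m)·s·f(s). -/

import Mathlib

open Set Filter MeasureTheory

noncomputable def phim (m x : ℝ) : ℝ := |x| ^ (m - 2) * x

noncomputable def Fint (f : ℝ → ℝ) (s : ℝ) : ℝ := ∫ t in (0:ℝ)..s, f t

noncomputable def Qfun (N m : ℝ) (f : ℝ → ℝ) (s : ℝ) : ℝ :=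
  m * N * Fint f s - (N - m) * s * f s

/-- `u` (with derivative function `u'`) is a solution of the radial quasilinear
equation on the set `J`. -/
def IsSolutionOn (N m : ℝ) (f : ℝ → ℝ) (J : Set ℝ) (u u' : ℝ → ℝ) : Prop :=
  (∀ r ∈ J, HasDerivWithinAt u (u' r) J r) ∧ ContinuousOn u' J ∧
    ∃ w' : ℝ → ℝ,
      (∀ r ∈ J ∩ Set.Ioi (0:ℝ),
        HasDerivWithinAt (fun t => phim m (u' t)) (w' r) (J ∩ Set.Ioi (0:ℝ)) r) ∧
      ContinuousOn w' (J ∩ Set.Ioi (0:ℝ)) ∧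
      ∀ r ∈ J ∩ Set.Ioi (0:ℝ), w' r + ((N - 1) / r) * phim m (u' r) + f (u r) = 0

def IsIVPSolutionOn (N m : ℝ) (f : ℝ → ℝ) (α : ℝ) (J : Set ℝ) (u u' : ℝ → ℝ) : Prop :=
  IsSolutionOn N m f J u u' ∧ u 0 = α ∧ u' 0 = 0

/-- Admissible domains for the IVP: `[0,∞)` or `[0,R)` with `0 < R`. -/
def IVPDomain (J : Set ℝ) : Prop :=
  J = Set.Ici (0:ℝ) ∨ ∃ R : ℝ, 0 < R ∧ J = Set.Ico (0:ℝ) R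

/-- The solution `u` of the IVP on `J` cannot be extended to a solution on a
strictly larger admissible domain. -/
def Noncontinuable (N m : ℝ) (f : ℝ → ℝ) (α : ℝ) (J : Set ℝ) (u u' : ℝ → ℝ) : Prop :=
  ∀ J' : Set ℝ, IVPDomain J' → J ⊂ J' →
    ¬ ∃ v v' : ℝ → ℝ, IsIVPSolutionOn N m f α J' v v' ∧ Set.EqOn v u J ∧ Set.EqOn v' u' J

open Classical in
/-- The filter describing the approach to the right endpoint of an IVP domain. -/
noncomputable def domEnd (J : Set ℝ) : Filter ℝ :=
  if J = Set.Ici (0:ℝ) then Filter.atTop else nhdsWithin (sSup J) (Set.Iio (sSup J))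

def LocLipschitzOn (f : ℝ → ℝ) (S : Set ℝ) : Prop :=
  ∀ x ∈ S, ∃ ε : ℝ, 0 < ε ∧ ∃ K : NNReal, LipschitzOnWith K f (Metric.ball x ε ∩ S)

/-- Assumption (f₂). -/
structure Hf2 (f : ℝ → ℝ) (βm βp : ℝ) (γm γp : EReal) : Prop where
  hβm : βm < 0
  hβp : 0 < βp
  hFneg : ∀ s : ℝ, s ∈ Set.Ioo βm βp → s ≠ 0 → Fint f s < 0
  hFβm : Fint f βm = 0
  hFβp : Fint f βp = 0
  hγp : (βp : EReal) < γp
  hγm : γm < (βm : EReal)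
  hfpos : ∀ s : ℝ, βp < s → (s : EReal) < γp → 0 < f s
  hfneg : ∀ s : ℝ, γm < (s : EReal) → s < βm → f s < 0
  hγpzero : ∀ s : ℝ, (s : EReal) = γp → f s = 0
  hγmzero : ∀ s : ℝ, (s : EReal) = γm → f s = 0
  hlim : ∃ L : EReal,
    Filter.Tendsto (fun s : ℝ => (Fint f s : EReal))
      (Filter.comap Real.toEReal (nhdsWithin γp (Set.Iio γp))) (nhds L) ∧
    Filter.Tendsto (fun s : ℝ => (Fint f s : EReal))
      (Filter.comap Real.toEReal (nhdsWithin γm (Set.Ioi γm))) (nhds L)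
  hlip : LocLipschitzOn f {s : ℝ | (γm < (s : EReal) ∧ s < 0) ∨ (0 < s ∧ (s : EReal) < γp)}

/-- Assumption (f₃). -/
def Hf3 (N m : ℝ) (f : ℝ → ℝ) (βm βp : ℝ) (γm γp : EReal) : Prop :=
  (γp = ⊤ →
    (∃ βb : ℝ, βp < βb ∧ ∀ s : ℝ, βb ≤ s → 0 ≤ Qfun N m f s) ∧
    (∃ θ : ℝ, θ ∈ Set.Ioo (0:ℝ) 1 ∧
      Filter.Tendsto (fun s : ℝ =>
        sInf ((fun p : ℝ × ℝ =>
          Qfun N m f p.2 * ((|s| ^ (m - 2) * s) / f p.1) ^ (N / m)) ''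
            (Set.Icc (θ * s) s ×ˢ Set.Icc (θ * s) s)))
        Filter.atTop Filter.atTop)) ∧
  (γm = ⊥ →
    (∃ βb : ℝ, -βb < βm ∧ ∀ s : ℝ, s ≤ -βb → 0 ≤ Qfun N m f s) ∧
    (∃ θ : ℝ, θ ∈ Set.Ioo (0:ℝ) 1 ∧
      Filter.Tendsto (fun s : ℝ =>
        sInf ((fun p : ℝ × ℝ =>
          Qfun N m f p.2 * ((|s| ^ (m - 2) * s) / f p.1) ^ (N / m)) ''
            (Set.Icc s (θ * s) ×ˢ Set.Icc s (θ * s))))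
        Filter.atBot Filter.atTop))

/-- Assumption (f₄). -/
def Hf4 (N m : ℝ) (f : ℝ → ℝ) (βm βp : ℝ) (γm γp : EReal) : Prop :=
  (γp ≠ ⊤ → ∃ L₀ : ℝ, 0 < L₀ ∧ ∃ βb : ℝ, βp < βb ∧
    ∀ s : ℝ, βb ≤ s → (s : EReal) < γp → f s ≤ L₀ * (γp.toReal - s) ^ (m - 1)) ∧
  (γm ≠ ⊥ → ∃ L₀ : ℝ, 0 < L₀ ∧ ∃ βb : ℝ, -βm < βb ∧
    ∀ s : ℝ, γm < (s : EReal) → s ≤ -βb → -f s ≤ L₀ * (s - γm.toReal) ^ (m - 1))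

private lemma abs_phim' {m : ℝ} (hm : 1 < m) (x : ℝ) : |phim m x| = |x| ^ (m - 1) := by
  rcases eq_or_ne x 0 with rfl | hx
  · simp [phim, Real.zero_rpow (show m - 1 ≠ 0 by linarith)]
  · have hax : (0:ℝ) < |x| := abs_pos.mpr hx
    unfold phim
    rw [abs_mul, abs_of_nonneg (Real.rpow_nonneg (abs_nonneg x) _),
      ← Real.rpow_add_one hax.ne']
    congr 1
    ring

private lemma phim_phim {m : ℝ} (hm : 1 < m) (x : ℝ) :
    phim (m / (m - 1)) (phim m x) = x := by
  have h1 : m - 1 ≠ 0 := by linarith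
  rcases eq_or_ne x 0 with rfl | hx
  · simp [phim]
  · have hax : (0:ℝ) < |x| := abs_pos.mpr hx
    conv_lhs => rw [phim, abs_phim' hm x]
    rw [phim, ← Real.rpow_mul hax.le, ← mul_assoc, ← Real.rpow_add hax,
      show (m - 1) * (m / (m - 1) - 2) + (m - 2) = 0 by field_simp; ring,
      Real.rpow_zero, one_mul]

private lemma abs_rpow_eq_phim_mul {m : ℝ} (hm : 1 < m) (x : ℝ) :
    |x| ^ m = phim m x * x := by
  rcases eq_or_ne x 0 with rfl | hx
  · simp [phim, Real.zero_rpow (show m ≠ 0 by linarith)]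
  · have hax : (0:ℝ) < |x| := abs_pos.mpr hx
    have hx2 : x * x = |x| * |x| := by rcases abs_cases x with ⟨h,_⟩|⟨h,_⟩ <;> nlinarith
    rw [phim, mul_assoc, hx2, ← mul_assoc, ← Real.rpow_add_one hax.ne',
      ← Real.rpow_add_one hax.ne']
    congr 1
    ring

private lemma hasDerivAt_Gfun {p : ℝ} (hp : 1 < p) (x : ℝ) :
    HasDerivAt (fun y : ℝ => |y| ^ p / p) (|x| ^ (p - 2) * x) x := by
  refine ((hasDerivAt_abs_rpow x hp).div_const p).congr_deriv ?_
  have hp0 : p ≠ 0 := by linarith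
  field_simp

/-- Pohozaev-type identity: `E'(r) = r^(N-1) Q(u(r))`. -/
theorem pohozaev_energy_derivative
    (N m : ℝ) (hm : 1 < m) (hNm : m ≤ N) (f : ℝ → ℝ) (hf : Continuous f)
    (J : Set ℝ) (hJc : J.OrdConnected) (hJ0 : J ⊆ Set.Ioi (0:ℝ))
    (u u' : ℝ → ℝ) (hu : IsSolutionOn N m f J u u') :
    ∀ r ∈ J, HasDerivWithinAt
      (fun t => m * t ^ N * (|u' t| ^ m / (m / (m - 1)) + Fint f (u t))
        + (N - m) * t ^ (N - 1) * phim m (u' t) * u t)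
      (r ^ (N - 1) * Qfun N m f (u r)) J r := by
  intro r hr
  have hm1 : (0:ℝ) < m - 1 := by linarith
  have hmp : (0:ℝ) < m := by linarith
  have hr0 : (0:ℝ) < r := hJ0 hr
  have hJeq : J ∩ Set.Ioi (0:ℝ) = J := Set.inter_eq_left.mpr hJ0
  obtain ⟨huD, hu'c, w', hw'D, hw'c, heq⟩ := hu
  rw [hJeq] at hw'D heq
  have hp1 : 1 < m / (m - 1) := by rw [lt_div_iff₀ hm1]; linarith
  have hu'r : HasDerivWithinAt u (u' r) J r := huD r hr
  have hwr : HasDerivWithinAt (fun t => phim m (u' t)) (w' r) J r := hw'D r hr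
  -- the |u'|^m / m' term via w
  have hGc : HasDerivWithinAt (fun t => |phim m (u' t)| ^ (m / (m - 1)) / (m / (m - 1)))
      ((|phim m (u' r)| ^ (m / (m - 1) - 2) * phim m (u' r)) * w' r) J r :=
    by have h := (hasDerivAt_Gfun hp1 (phim m (u' r))).comp_hasDerivWithinAt r hwr; exact h
  have hphiinv : |phim m (u' r)| ^ (m / (m - 1) - 2) * phim m (u' r) = u' r := phim_phim hm (u' r)
  have hEqfun : ∀ t : ℝ, |u' t| ^ m / (m / (m - 1)) = |phim m (u' t)| ^ (m / (m - 1)) / (m / (m - 1)) := by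
    intro t
    congr 1
    rw [abs_phim' hm (u' t), ← Real.rpow_mul (abs_nonneg (u' t))]
    congr 1
    field_simp
  have hGc2 : HasDerivWithinAt (fun t => |u' t| ^ m / (m / (m - 1))) (u' r * w' r) J r := by
    rw [← hphiinv]
    exact hGc.congr (fun t _ => hEqfun t) (hEqfun r)
  -- the F(u) term
  have hFc : HasDerivWithinAt (fun t => Fint f (u t)) (f (u r) * u' r) J r := by
    have hFTC : HasDerivAt (Fint f) (f (u r)) (u r) :=
      intervalIntegral.integral_hasDerivAt_right (hf.intervalIntegrable 0 (u r))
        (hf.stronglyMeasurableAtFilter _ _) hf.continuousAt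
    exact hFTC.comp_hasDerivWithinAt r hu'r
  -- power functions
  have htN : HasDerivWithinAt (fun t : ℝ => t ^ N) (N * r ^ (N - 1)) J r :=
    (Real.hasDerivAt_rpow_const (Or.inl hr0.ne')).hasDerivWithinAt
  have htN1 : HasDerivWithinAt (fun t : ℝ => t ^ (N - 1)) ((N - 1) * r ^ (N - 1 - 1)) J r :=
    (Real.hasDerivAt_rpow_const (Or.inl hr0.ne')).hasDerivWithinAt
  have h1 := (htN.const_mul m).mul (hGc2.add hFc)
  have h2 := ((htN1.const_mul (N - m)).mul hwr).mul hu'r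
  have hE := h1.add h2
  refine hE.congr_deriv ?_
  symm
  simp only [Pi.add_apply, Pi.mul_apply]
  have hW' : w' r = -((N - 1) / r * phim m (u' r) + f (u r)) := by
    have := heq r hr
    linarith
  have habs : |u' r| ^ m = phim m (u' r) * u' r := abs_rpow_eq_phim_mul hm (u' r)
  have hrN : r ^ N = r ^ (N - 1) * r := by
    rw [← Real.rpow_add_one hr0.ne' (N - 1)]
    congr 1
    ring
  have hrN2 : r ^ (N - 1 - 1) = r ^ (N - 1) / r := by
    rw [Real.rpow_sub hr0, Real.rpow_one]
  rw [Qfun, hW', habs, hrN, hrN2]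
  generalize phim m (u' r) = W
  generalize Fint f (u r) = Fv
  generalize r ^ (N - 1) = A
  field_simp
  ring
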